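/- Let n, m be natural numbers with n ≥ m+1, let A_0 be a real symmetric positive definite n×n matrix, let ρ_1, ..., ρ_m ∈ ℝ and set A_i = ρ_i A_0 for i = 1, ..., m. Let b_0, ..., b_m ∈ ℝ^n and c_0, ..., c_m ∈ ℝ, and define f_i(x) = xᵀA_i x + 2 b_iᵀ x, f̄_i(x) = xᵀA_i x, g_i(x,t) = xᵀA_i x + 2 t b_iᵀ x + 2 c_i t², F(x) = (f_0(x), ..., f_m(x)), F̄(x) = (f̄_0(x), ..., f̄_m(x)), G(x,t) = (g_0(x,t), ..., g_m(x,t)). Then (a) the images F(ℝ^n) and F̄(ℝ^n) are convex subsets of ℝ^{m+1}, and (b) the image G(ℝ^{n+1}) is a convex subset of ℝ^{m+1}. -/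

import Mathlib

open Matrix Set

section Aux

/-- The quadratic form of a positive definite matrix is nonnegative. -/
lemma aux_q_nonneg {n : ℕ} (A₀ : Matrix (Fin n) (Fin n) ℝ)
    (hpos : ∀ x : Fin n → ℝ, x ≠ 0 → 0 < x ⬝ᵥ (A₀ *ᵥ x)) (x : Fin n → ℝ) :
    0 ≤ x ⬝ᵥ (A₀ *ᵥ x) := by
  by_cases hx : x = 0
  · subst hx; simp
  · exact (hpos x hx).le

lemma aux_q_expand {n : ℕ} (A₀ : Matrix (Fin n) (Fin n) ℝ) (x z : Fin n → ℝ) (t : ℝ) :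
    (x + t • z) ⬝ᵥ (A₀ *ᵥ (x + t • z)) =
      x ⬝ᵥ (A₀ *ᵥ x) + (x ⬝ᵥ (A₀ *ᵥ z) + z ⬝ᵥ (A₀ *ᵥ x)) * t + (z ⬝ᵥ (A₀ *ᵥ z)) * t^2 := by
  simp [Matrix.mulVec_add, Matrix.mulVec_smul, dotProduct_add, add_dotProduct,
    dotProduct_smul, smul_dotProduct, smul_eq_mul]
  ring

lemma aux_q_combo {n : ℕ} (A₀ : Matrix (Fin n) (Fin n) ℝ) (x y : Fin n → ℝ) (θ θ' : ℝ) :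
    (θ • x + θ' • y) ⬝ᵥ (A₀ *ᵥ (θ • x + θ' • y)) =
      θ^2 * (x ⬝ᵥ (A₀ *ᵥ x)) + θ*θ' * (x ⬝ᵥ (A₀ *ᵥ y) + y ⬝ᵥ (A₀ *ᵥ x))
        + θ'^2 * (y ⬝ᵥ (A₀ *ᵥ y)) := by
  simp [Matrix.mulVec_add, Matrix.mulVec_smul, dotProduct_add, add_dotProduct,
    dotProduct_smul, smul_dotProduct, smul_eq_mul]
  ring

lemma aux_q_sub {n : ℕ} (A₀ : Matrix (Fin n) (Fin n) ℝ) (x y : Fin n → ℝ) :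
    (x - y) ⬝ᵥ (A₀ *ᵥ (x - y)) =
      x ⬝ᵥ (A₀ *ᵥ x) - (x ⬝ᵥ (A₀ *ᵥ y) + y ⬝ᵥ (A₀ *ᵥ x)) + y ⬝ᵥ (A₀ *ᵥ y) := by
  simp [Matrix.mulVec_sub, Matrix.mulVec_add, dotProduct_sub, sub_dotProduct, dotProduct_add]
  ring

lemma aux_q_smul {n : ℕ} (A₀ : Matrix (Fin n) (Fin n) ℝ) (t : ℝ) (x : Fin n → ℝ) :
    (t • x) ⬝ᵥ (A₀ *ᵥ (t • x)) = t^2 * (x ⬝ᵥ (A₀ *ᵥ x)) := by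
  rw [smul_dotProduct, Matrix.mulVec_smul, dotProduct_smul, smul_eq_mul, smul_eq_mul]
  ring

/-- A quadratic equation with positive leading coefficient and value at `0` at most `s`
attains the value `s`. -/
lemma aux_solve_quad (a bb c s : ℝ) (ha : 0 < a) (hcs : c ≤ s) :
    ∃ t : ℝ, a*t^2 + bb*t + c = s := by
  have hd : (0:ℝ) ≤ bb^2 + 4*a*(s-c) := by nlinarith
  have hsq : Real.sqrt (bb^2 + 4*a*(s-c)) ^ 2 = bb^2 + 4*a*(s-c) := Real.sq_sqrt hd
  refine ⟨(Real.sqrt (bb^2 + 4*a*(s-c)) - bb)/(2*a), ?_⟩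
  field_simp
  nlinarith [hsq, Real.sq_sqrt (show (0:ℝ) ≤ bb^2 + a*4*(s-c) by linarith)]

/-- Dimension count: there is a nonzero `z` with `L z` proportional to `α`. -/
lemma aux_exists_z {n m : ℕ} (hnm : n ≥ m + 1) (b : Fin (m+1) → Fin n → ℝ)
    (α : Fin (m+1) → ℝ) (hα : α 0 = 1) :
    ∃ (z : Fin n → ℝ) (lam : ℝ), z ≠ 0 ∧ ∀ i, b i ⬝ᵥ z = lam * α i := by
  let Ψ : ((Fin n → ℝ) × ℝ) →ₗ[ℝ] (Fin (m+1) → ℝ) :=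
    { toFun := fun p => fun i => b i ⬝ᵥ p.1 - p.2 * α i
      map_add' := by intro p q; funext i; simp [dotProduct_add]; ring
      map_smul' := by intro r p; funext i; simp [dotProduct_smul, smul_eq_mul]; ring }
  have hni : ¬ Function.Injective Ψ := by
    intro hinj
    have := LinearMap.finrank_le_finrank_of_injective hinj
    simp [Module.finrank_prod] at this
    omega
  rw [← LinearMap.ker_eq_bot] at hni
  obtain ⟨p, hp, hpne⟩ := (Submodule.ne_bot_iff _).mp hni
  have hΨ : ∀ i, b i ⬝ᵥ p.1 - p.2 * α i = 0 := fun i => congrFun hp i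
  refine ⟨p.1, p.2, ?_, fun i => by linarith [hΨ i]⟩
  intro h1
  apply hpne
  have h2 : p.2 = 0 := by have := hΨ 0; rw [h1, hα] at this; simpa using this
  exact Prod.ext h1 h2

/-- The "epigraph" set whose image under the affine map is the range of `F`. -/
def Sset {n m : ℕ} (A₀ : Matrix (Fin n) (Fin n) ℝ) (α : Fin (m+1) → ℝ)
    (b : Fin (m+1) → Fin n → ℝ) (κ : Fin (m+1) → ℝ) : Set (Fin (m+1) → ℝ) :=
  {w | ∃ x s, x ⬝ᵥ (A₀ *ᵥ x) ≤ s ∧ w = fun i => α i * s + 2 * (b i ⬝ᵥ x) + κ i}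

lemma aux_convex_Sset {n m : ℕ} (A₀ : Matrix (Fin n) (Fin n) ℝ)
    (hpos : ∀ x : Fin n → ℝ, x ≠ 0 → 0 < x ⬝ᵥ (A₀ *ᵥ x))
    (α : Fin (m+1) → ℝ) (b : Fin (m+1) → Fin n → ℝ) (κ : Fin (m+1) → ℝ) :
    Convex ℝ (Sset A₀ α b κ) := by
  rintro w₁ ⟨x₁, s₁, h₁, rfl⟩ w₂ ⟨x₂, s₂, h₂, rfl⟩ θ θ' hθ hθ' hsum
  refine ⟨θ • x₁ + θ' • x₂, θ * s₁ + θ' * s₂, ?_, ?_⟩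
  · rw [aux_q_combo]
    have key : θ^2 * (x₁ ⬝ᵥ (A₀ *ᵥ x₁)) + θ*θ' * (x₁ ⬝ᵥ (A₀ *ᵥ x₂) + x₂ ⬝ᵥ (A₀ *ᵥ x₁))
        + θ'^2 * (x₂ ⬝ᵥ (A₀ *ᵥ x₂))
        = θ * (x₁ ⬝ᵥ (A₀ *ᵥ x₁)) + θ' * (x₂ ⬝ᵥ (A₀ *ᵥ x₂))
          - θ*θ' * ((x₁ - x₂) ⬝ᵥ (A₀ *ᵥ (x₁ - x₂))) := by
      rw [aux_q_sub]
      linear_combination (θ * (x₁ ⬝ᵥ (A₀ *ᵥ x₁)) + θ' * (x₂ ⬝ᵥ (A₀ *ᵥ x₂))) * hsum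
    rw [key]
    have h3 : 0 ≤ θ*θ' * ((x₁ - x₂) ⬝ᵥ (A₀ *ᵥ (x₁ - x₂))) :=
      mul_nonneg (mul_nonneg hθ hθ') (aux_q_nonneg A₀ hpos _)
    nlinarith [mul_le_mul_of_nonneg_left h₁ hθ, mul_le_mul_of_nonneg_left h₂ hθ']
  · funext i
    simp only [Pi.add_apply, Pi.smul_apply, smul_eq_mul, dotProduct_add, dotProduct_smul]
    linear_combination (κ i) * hsum

lemma aux_range_eq_Sset {n m : ℕ} (hnm : n ≥ m + 1) (A₀ : Matrix (Fin n) (Fin n) ℝ)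
    (hpos : ∀ x : Fin n → ℝ, x ≠ 0 → 0 < x ⬝ᵥ (A₀ *ᵥ x))
    (α : Fin (m+1) → ℝ) (hα : α 0 = 1) (b : Fin (m+1) → Fin n → ℝ) (κ : Fin (m+1) → ℝ) :
    Set.range (fun (x : Fin n → ℝ) (i : Fin (m+1)) =>
      α i * (x ⬝ᵥ (A₀ *ᵥ x)) + 2 * (b i ⬝ᵥ x) + κ i) = Sset A₀ α b κ := by
  ext w
  constructor
  · rintro ⟨x, rfl⟩
    exact ⟨x, x ⬝ᵥ (A₀ *ᵥ x), le_refl _, rfl⟩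
  · rintro ⟨x, s, hle, rfl⟩
    obtain ⟨z, lam, hz, hbz⟩ := aux_exists_z hnm b α hα
    obtain ⟨t, ht⟩ := aux_solve_quad (z ⬝ᵥ (A₀ *ᵥ z))
      (x ⬝ᵥ (A₀ *ᵥ z) + z ⬝ᵥ (A₀ *ᵥ x) + 2*lam) (x ⬝ᵥ (A₀ *ᵥ x)) s (hpos z hz) hle
    refine ⟨x + t • z, ?_⟩
    funext i
    have hb : b i ⬝ᵥ (x + t • z) = b i ⬝ᵥ x + t * (lam * α i) := by
      simp [dotProduct_add, dotProduct_smul, hbz i, smul_eq_mul]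
    show α i * ((x + t • z) ⬝ᵥ (A₀ *ᵥ (x + t • z))) + 2 * (b i ⬝ᵥ (x + t • z)) + κ i = _
    rw [aux_q_expand, hb]
    linear_combination (α i) * ht

lemma aux_exists_q_eq {n : ℕ} (hn : 0 < n) (A₀ : Matrix (Fin n) (Fin n) ℝ)
    (hpos : ∀ x : Fin n → ℝ, x ≠ 0 → 0 < x ⬝ᵥ (A₀ *ᵥ x)) {r : ℝ} (hr : 0 ≤ r) :
    ∃ x : Fin n → ℝ, x ⬝ᵥ (A₀ *ᵥ x) = r := by
  have he : (fun _ : Fin n => (1:ℝ)) ≠ 0 := by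
    intro h
    have := congrFun h ⟨0, hn⟩
    simp at this
  set e : Fin n → ℝ := fun _ => 1
  have hqe : 0 < e ⬝ᵥ (A₀ *ᵥ e) := hpos e he
  refine ⟨Real.sqrt (r / (e ⬝ᵥ (A₀ *ᵥ e))) • e, ?_⟩
  have h1 : Real.sqrt (r / (e ⬝ᵥ (A₀ *ᵥ e))) ^ 2 = r / (e ⬝ᵥ (A₀ *ᵥ e)) :=
    Real.sq_sqrt (div_nonneg hr hqe.le)
  rw [smul_dotProduct, Matrix.mulVec_smul, dotProduct_smul]
  rw [smul_eq_mul, smul_eq_mul, ← mul_assoc, ← pow_two, h1]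
  field_simp

lemma aux_range_eq_ray {n m : ℕ} (hn : 0 < n) (A₀ : Matrix (Fin n) (Fin n) ℝ)
    (hpos : ∀ x : Fin n → ℝ, x ≠ 0 → 0 < x ⬝ᵥ (A₀ *ᵥ x)) (α : Fin (m+1) → ℝ) :
    Set.range (fun (x : Fin n → ℝ) (i : Fin (m+1)) => α i * (x ⬝ᵥ (A₀ *ᵥ x)))
      = {w | ∃ r, 0 ≤ r ∧ w = fun i => α i * r} := by
  ext w
  constructor
  · rintro ⟨x, rfl⟩
    by_cases hx : x = 0
    · exact ⟨0, le_refl _, by subst hx; simp⟩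
    · exact ⟨x ⬝ᵥ (A₀ *ᵥ x), (hpos x hx).le, rfl⟩
  · rintro ⟨r, hr, rfl⟩
    obtain ⟨x, hx⟩ := aux_exists_q_eq hn A₀ hpos hr
    exact ⟨x, by funext i; simp [hx]⟩

lemma aux_convex_ray {m : ℕ} (α : Fin (m+1) → ℝ) :
    Convex ℝ {w : Fin (m+1) → ℝ | ∃ r, 0 ≤ r ∧ w = fun i => α i * r} := by
  rintro w₁ ⟨r₁, hr₁, rfl⟩ w₂ ⟨r₂, hr₂, rfl⟩ θ θ' hθ hθ' hsum
  refine ⟨θ * r₁ + θ' * r₂, by positivity, ?_⟩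
  funext i
  simp only [Pi.add_apply, Pi.smul_apply, smul_eq_mul]
  ring

/-- The candidate image of the homogenized map `G`. -/
def Tset {n m : ℕ} (A₀ : Matrix (Fin n) (Fin n) ℝ) (α : Fin (m+1) → ℝ)
    (b : Fin (m+1) → Fin n → ℝ) (κ : Fin (m+1) → ℝ) : Set (Fin (m+1) → ℝ) :=
  {w | (∃ μ : ℝ, 0 < μ ∧ ∃ p ∈ Sset A₀ α b κ, w = μ • p) ∨ (∃ r, 0 ≤ r ∧ w = fun i => α i * r)}

lemma aux_Sset_up {n m : ℕ} {A₀ : Matrix (Fin n) (Fin n) ℝ} {α : Fin (m+1) → ℝ}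
    {b : Fin (m+1) → Fin n → ℝ} {κ : Fin (m+1) → ℝ} {p : Fin (m+1) → ℝ}
    (hp : p ∈ Sset A₀ α b κ) {ρ : ℝ} (hρ : 0 ≤ ρ) :
    (fun i => p i + ρ * α i) ∈ Sset A₀ α b κ := by
  obtain ⟨x, s, hle, rfl⟩ := hp
  exact ⟨x, s + ρ, by linarith, by funext i; ring⟩

lemma aux_convex_Tset {n m : ℕ} (A₀ : Matrix (Fin n) (Fin n) ℝ)
    (hpos : ∀ x : Fin n → ℝ, x ≠ 0 → 0 < x ⬝ᵥ (A₀ *ᵥ x))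
    (α : Fin (m+1) → ℝ) (b : Fin (m+1) → Fin n → ℝ) (κ : Fin (m+1) → ℝ) :
    Convex ℝ (Tset A₀ α b κ) := by
  rintro w₁ h₁ w₂ h₂ θ θ' hθ hθ' hsum
  rcases eq_or_lt_of_le hθ with hθ0 | hθpos
  · have hθ'1 : θ' = 1 := by linarith
    subst hθ'1; rw [← hθ0]; simpa using h₂
  rcases eq_or_lt_of_le hθ' with hθ'0 | hθ'pos
  · have hθ1 : θ = 1 := by linarith
    subst hθ1; rw [← hθ'0]; simpa using h₁
  rcases h₁ with ⟨μ₁, hμ₁, p₁, hp₁, rfl⟩ | ⟨r₁, hr₁, rfl⟩ <;>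
    rcases h₂ with ⟨μ₂, hμ₂, p₂, hp₂, rfl⟩ | ⟨r₂, hr₂, rfl⟩
  · left
    have hμ : 0 < θ * μ₁ + θ' * μ₂ := by positivity
    refine ⟨θ * μ₁ + θ' * μ₂, hμ, (θ*μ₁/(θ*μ₁+θ'*μ₂)) • p₁ + (θ'*μ₂/(θ*μ₁+θ'*μ₂)) • p₂,
      aux_convex_Sset A₀ hpos α b κ hp₁ hp₂ (by positivity) (by positivity) (by field_simp), ?_⟩
    funext i
    simp only [Pi.add_apply, Pi.smul_apply, smul_eq_mul]
    field_simp
  · left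
    refine ⟨θ * μ₁, by positivity, fun i => p₁ i + (θ' * r₂ / (θ * μ₁)) * α i,
      aux_Sset_up hp₁ (by positivity), ?_⟩
    funext i
    simp only [Pi.add_apply, Pi.smul_apply, smul_eq_mul]
    field_simp
  · left
    refine ⟨θ' * μ₂, by positivity, fun i => p₂ i + (θ * r₁ / (θ' * μ₂)) * α i,
      aux_Sset_up hp₂ (by positivity), ?_⟩
    funext i
    simp only [Pi.add_apply, Pi.smul_apply, smul_eq_mul]
    field_simp
    ring
  · right
    refine ⟨θ * r₁ + θ' * r₂, by positivity, ?_⟩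
    funext i
    simp only [Pi.add_apply, Pi.smul_apply, smul_eq_mul]
    ring

lemma aux_range_G_eq_Tset {n m : ℕ} (hnm : n ≥ m + 1) (A₀ : Matrix (Fin n) (Fin n) ℝ)
    (hpos : ∀ x : Fin n → ℝ, x ≠ 0 → 0 < x ⬝ᵥ (A₀ *ᵥ x))
    (α : Fin (m+1) → ℝ) (hα : α 0 = 1) (b : Fin (m+1) → Fin n → ℝ) (κ : Fin (m+1) → ℝ) :
    Set.range (fun (p : (Fin n → ℝ) × ℝ) (i : Fin (m+1)) =>
      α i * (p.1 ⬝ᵥ (A₀ *ᵥ p.1)) + 2 * p.2 * (b i ⬝ᵥ p.1) + κ i * p.2 ^ 2)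
      = Tset A₀ α b κ := by
  have hn : 0 < n := by omega
  ext w
  constructor
  · rintro ⟨⟨x, t⟩, rfl⟩
    by_cases ht : t = 0
    · right
      refine ⟨x ⬝ᵥ (A₀ *ᵥ x), aux_q_nonneg A₀ hpos x, ?_⟩
      funext i
      simp [ht]
    · left
      refine ⟨t^2, by positivity, fun i =>
        α i * ((t⁻¹ • x) ⬝ᵥ (A₀ *ᵥ (t⁻¹ • x))) + 2 * (b i ⬝ᵥ (t⁻¹ • x)) + κ i,
        ⟨t⁻¹ • x, _, le_refl _, rfl⟩, ?_⟩
      funext i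
      simp only [Pi.smul_apply, smul_eq_mul]
      rw [aux_q_smul, dotProduct_smul, smul_eq_mul]
      field_simp
  · rintro (⟨μ, hμ, p, hp, rfl⟩ | ⟨r, hr, rfl⟩)
    · rw [← aux_range_eq_Sset hnm A₀ hpos α hα b κ] at hp
      obtain ⟨x₀, rfl⟩ := hp
      refine ⟨(Real.sqrt μ • x₀, Real.sqrt μ), ?_⟩
      have hs : Real.sqrt μ ^ 2 = μ := Real.sq_sqrt hμ.le
      funext i
      simp only [Pi.smul_apply, smul_eq_mul]
      rw [aux_q_smul, dotProduct_smul, smul_eq_mul, hs]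
      linear_combination (2 * (b i ⬝ᵥ x₀)) * hs
    · obtain ⟨x, hx⟩ := aux_exists_q_eq hn A₀ hpos hr
      refine ⟨(x, 0), ?_⟩
      funext i
      simp [hx]

end Aux

/-- Corollary 1.  If `n ≥ m+1`, `A 0` is symmetric positive definite and
`A i = ρ i • A 0` for `i ≠ 0`, then the images of `F`, `F̄` and of the homogenized map `G`
are convex. -/
theorem convexity_of_images_scalar_multiples (n m : ℕ) (hnm : n ≥ m + 1)
    (A : Fin (m + 1) → Matrix (Fin n) (Fin n) ℝ)
    (b : Fin (m + 1) → (Fin n → ℝ)) (c : Fin (m + 1) → ℝ)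
    (ρ : Fin (m + 1) → ℝ)
    (hA0symm : (A 0).IsSymm)
    (hA0posdef : ∀ x : Fin n → ℝ, x ≠ 0 → 0 < x ⬝ᵥ ((A 0) *ᵥ x))
    (hAi : ∀ i : Fin (m + 1), i ≠ 0 → A i = ρ i • A 0) :
    Convex ℝ (Set.range (fun (x : Fin n → ℝ) (i : Fin (m + 1)) =>
      (x ⬝ᵥ ((A i) *ᵥ x) + 2 * ((b i) ⬝ᵥ x) : ℝ))) ∧
    Convex ℝ (Set.range (fun (x : Fin n → ℝ) (i : Fin (m + 1)) =>
      (x ⬝ᵥ ((A i) *ᵥ x) : ℝ))) ∧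
    Convex ℝ (Set.range (fun (p : (Fin n → ℝ) × ℝ) (i : Fin (m + 1)) =>
      (p.1 ⬝ᵥ ((A i) *ᵥ p.1) + 2 * p.2 * ((b i) ⬝ᵥ p.1) + 2 * c i * p.2 ^ 2 : ℝ))) := by
  have hn : 0 < n := by omega
  set α : Fin (m + 1) → ℝ := fun i => if i = 0 then 1 else ρ i with hαdef
  have hα : α 0 = 1 := by simp [hαdef]
  have hAq : ∀ (i : Fin (m + 1)) (x : Fin n → ℝ),
      x ⬝ᵥ (A i *ᵥ x) = α i * (x ⬝ᵥ (A 0 *ᵥ x)) := by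
    intro i x
    by_cases h : i = 0
    · subst h; simp [hαdef]
    · rw [hAi i h]
      simp [hαdef, h, Matrix.smul_mulVec, dotProduct_smul, smul_eq_mul]
  refine ⟨?_, ?_, ?_⟩
  · have heq : (fun (x : Fin n → ℝ) (i : Fin (m + 1)) =>
        (x ⬝ᵥ ((A i) *ᵥ x) + 2 * ((b i) ⬝ᵥ x) : ℝ))
        = fun (x : Fin n → ℝ) (i : Fin (m + 1)) =>
            α i * (x ⬝ᵥ (A 0 *ᵥ x)) + 2 * (b i ⬝ᵥ x) + (fun _ : Fin (m+1) => (0:ℝ)) i := by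
      funext x i
      rw [hAq i x]
      ring
    rw [heq, aux_range_eq_Sset hnm (A 0) hA0posdef α hα b _]
    exact aux_convex_Sset (A 0) hA0posdef α b _
  · have heq : (fun (x : Fin n → ℝ) (i : Fin (m + 1)) => (x ⬝ᵥ ((A i) *ᵥ x) : ℝ))
        = fun (x : Fin n → ℝ) (i : Fin (m + 1)) => α i * (x ⬝ᵥ (A 0 *ᵥ x)) := by
      funext x i
      rw [hAq i x]
    rw [heq, aux_range_eq_ray hn (A 0) hA0posdef α]
    exact aux_convex_ray α
  · have heq : (fun (p : (Fin n → ℝ) × ℝ) (i : Fin (m + 1)) =>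
        (p.1 ⬝ᵥ ((A i) *ᵥ p.1) + 2 * p.2 * ((b i) ⬝ᵥ p.1) + 2 * c i * p.2 ^ 2 : ℝ))
        = fun (p : (Fin n → ℝ) × ℝ) (i : Fin (m + 1)) =>
            α i * (p.1 ⬝ᵥ (A 0 *ᵥ p.1)) + 2 * p.2 * (b i ⬝ᵥ p.1)
              + (fun j : Fin (m+1) => 2 * c j) i * p.2 ^ 2 := by
      funext p i
      rw [hAq i p.1]
    rw [heq, aux_range_G_eq_Tset hnm (A 0) hA0posdef α hα b _]
    exact aux_convex_Tset (A 0) hA0posdef α b _
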